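/- Let H be a discrete subgroup of SL(2,ℝ) and let Γ ≤ H be a subgroup that is discrete and cocompact (there is a compact K ⊆ ℍ with ℍ = ⋃_{γ∈Γ} γ•K). Then Γ has finite index in H. -/

import Mathlib

noncomputable section

open UpperHalfPlane MeasureTheory Topology Filter Metric Set Pointwise

local notation "SL2R" => Matrix.SpecialLinearGroup (Fin 2) ℝ

/-- The matrix topology on `SL(2,ℝ)`, induced from the space of `2 × 2` real matrices. -/
instance : TopologicalSpace SL2R :=
  TopologicalSpace.induced (fun g => (g : Matrix (Fin 2) (Fin 2) ℝ)) inferInstance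

/-- The basepoint `o = i` of the upper half-plane. -/
def o : ℍ := UpperHalfPlane.I

/-- A subgroup of `SL(2,ℝ)` is cocompact if the translates of some compact set cover `ℍ`. -/
def IsCocompact (Γ : Subgroup SL2R) : Prop :=
  ∃ K : Set ℍ, IsCompact K ∧ ⋃ γ : Γ, (γ : SL2R) • K = Set.univ

/-- The orbit `Λ = Γ • o` of the basepoint. -/
def orbitO (Γ : Subgroup SL2R) : Set ℍ := {z : ℍ | ∃ γ ∈ Γ, γ • o = z}

/-- The focal counting function `υ(z) = #{λ ∈ Λ | λ ≠ o, d(z,λ) = d(z,o)}`. -/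
def upsilon (Γ : Subgroup SL2R) (z : ℍ) : ℕ :=
  {l : ℍ | l ∈ orbitO Γ ∧ l ≠ o ∧ dist z l = dist z o}.ncard

/-- The Brillouin index `B(z) = #{λ ∈ Λ | d(z,λ) ≤ d(z,o)}`. -/
def brillouinIndex (Γ : Subgroup SL2R) (z : ℍ) : ℕ :=
  {l : ℍ | l ∈ orbitO Γ ∧ dist z l ≤ dist z o}.ncard

/-- The `k`-th Brillouin set `B_k = {z | B(z) = k}`. -/
def brillouinSet (Γ : Subgroup SL2R) (k : ℕ) : Set ℍ := {z : ℍ | brillouinIndex Γ z = k}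

/-- The perpendicular bisector `L_λ = {z | d(z,o) = d(z,λ)}`. -/
def bisector (l : ℍ) : Set ℍ := {z : ℍ | dist z o = dist z l}

namespace SLAux

lemma continuous_coeMatrix : Continuous (fun g : SL2R => (g : Matrix (Fin 2) (Fin 2) ℝ)) :=
  continuous_induced_dom

lemma embedding_coeMatrix : IsEmbedding (fun g : SL2R => (g : Matrix (Fin 2) (Fin 2) ℝ)) :=
  ⟨⟨rfl⟩, fun a b h => Subtype.ext h⟩

instance : T2Space SL2R := embedding_coeMatrix.t2Space

instance : IsTopologicalGroup SL2R where
  continuous_mul := by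
    apply continuous_induced_rng.mpr
    show Continuous (fun p : SL2R × SL2R => ((p.1 * p.2 : SL2R) : Matrix (Fin 2) (Fin 2) ℝ))
    have : (fun p : SL2R × SL2R => ((p.1 * p.2 : SL2R) : Matrix (Fin 2) (Fin 2) ℝ))
        = fun p : SL2R × SL2R => ((p.1 : Matrix (Fin 2) (Fin 2) ℝ) * (p.2 : Matrix (Fin 2) (Fin 2) ℝ)) := by
      funext p; exact Matrix.SpecialLinearGroup.coe_mul _ _
    rw [this]
    exact (continuous_coeMatrix.comp continuous_fst).matrix_mul
      (continuous_coeMatrix.comp continuous_snd)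
  continuous_inv := by
    apply continuous_induced_rng.mpr
    show Continuous (fun g : SL2R => ((g⁻¹ : SL2R) : Matrix (Fin 2) (Fin 2) ℝ))
    have : (fun g : SL2R => ((g⁻¹ : SL2R) : Matrix (Fin 2) (Fin 2) ℝ))
        = fun g : SL2R => ((g : Matrix (Fin 2) (Fin 2) ℝ)).adjugate := by
      funext g; exact Matrix.SpecialLinearGroup.coe_inv g
    rw [this]
    exact continuous_coeMatrix.matrix_adjugate

lemma closedEmbedding_coeMatrix :
    IsClosedEmbedding (fun g : SL2R => (g : Matrix (Fin 2) (Fin 2) ℝ)) := by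
  refine ⟨embedding_coeMatrix, ?_⟩
  have : Set.range (fun g : SL2R => (g : Matrix (Fin 2) (Fin 2) ℝ))
      = {M : Matrix (Fin 2) (Fin 2) ℝ | M.det = 1} := by
    ext M
    constructor
    · rintro ⟨g, rfl⟩; exact g.2
    · intro h; exact ⟨⟨M, h⟩, rfl⟩
  rw [this]
  exact isClosed_eq (Continuous.matrix_det continuous_id) continuous_const

lemma denom_ne (g : SL2R) :
    ((g 1 0 : ℝ) : ℂ) * Complex.I + ((g 1 1 : ℝ) : ℂ) ≠ 0 := by
  intro h
  have h1 : (g 1 0 : ℝ) = 0 := by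
    have := congrArg Complex.im h
    simpa using this
  have h2 : (g 1 1 : ℝ) = 0 := by
    have := congrArg Complex.re h
    simpa using this
  have hd : Matrix.det (g : Matrix (Fin 2) (Fin 2) ℝ) = 1 := g.2
  rw [Matrix.det_fin_two] at hd
  change g 0 0 * g 1 1 - g 0 1 * g 1 0 = 1 at hd
  rw [h1, h2] at hd
  norm_num at hd

lemma coe_smul_o (g : SL2R) :
    ((g • o : ℍ) : ℂ) = (((g 0 0 : ℝ) : ℂ) * Complex.I + ((g 0 1 : ℝ) : ℂ)) /
      (((g 1 0 : ℝ) : ℂ) * Complex.I + ((g 1 1 : ℝ) : ℂ)) := by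
  rw [UpperHalfPlane.specialLinearGroup_apply]
  simp [o, UpperHalfPlane.coe_mk, UpperHalfPlane.I]

lemma continuous_psi : Continuous (fun g : SL2R => ((g • o : ℍ) : ℂ)) := by
  have h : ∀ i j : Fin 2, Continuous fun g : SL2R => ((g i j : ℝ) : ℂ) := fun i j =>
    Complex.continuous_ofReal.comp (continuous_coeMatrix.matrix_elem i j)
  have : (fun g : SL2R => ((g • o : ℍ) : ℂ))
      = fun g : SL2R => (((g 0 0 : ℝ) : ℂ) * Complex.I + ((g 0 1 : ℝ) : ℂ)) /
        (((g 1 0 : ℝ) : ℂ) * Complex.I + ((g 1 1 : ℝ) : ℂ)) :=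
    funext coe_smul_o
  rw [this]
  exact Continuous.div (((h 0 0).mul continuous_const).add (h 0 1))
    (((h 1 0).mul continuous_const).add (h 1 1)) denom_ne

end SLAux

namespace SLAux

lemma entries_bound {a b c d m R : ℝ} (hdet : a * d - b * c = 1)
    (hm : 0 < m)
    (him : m ≤ ((((a : ℝ) : ℂ) * Complex.I + b) / (((c : ℝ) : ℂ) * Complex.I + d)).im)
    (hns : ‖(((a : ℝ) : ℂ) * Complex.I + b) / (((c : ℝ) : ℂ) * Complex.I + d)‖ ≤ R) :
    a ^ 2 + b ^ 2 ≤ R ^ 2 / m ∧ c ^ 2 + d ^ 2 ≤ 1 / m := by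
  set z : ℂ := ((a : ℝ) : ℂ) * Complex.I + b with hz
  set δ : ℂ := ((c : ℝ) : ℂ) * Complex.I + d with hδ
  have hzre : z.re = b := by simp [hz]
  have hzim : z.im = a := by simp [hz]
  have hδre : δ.re = d := by simp [hδ]
  have hδim : δ.im = c := by simp [hδ]
  have hnsδ : Complex.normSq δ = c ^ 2 + d ^ 2 := by
    rw [Complex.normSq_apply, hδre, hδim]; ring
  have hnsz : Complex.normSq z = a ^ 2 + b ^ 2 := by
    rw [Complex.normSq_apply, hzre, hzim]; ring
  have him' : (z / δ).im = 1 / (c ^ 2 + d ^ 2) := by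
    rw [Complex.div_im, hzre, hzim, hδre, hδim, hnsδ]
    rw [div_sub_div_same, hdet]
  rw [him'] at him
  have hcd0 : 0 ≤ c ^ 2 + d ^ 2 := by positivity
  have hcdpos : 0 < c ^ 2 + d ^ 2 := by
    by_contra hle
    push_neg at hle
    have hz0 : c ^ 2 + d ^ 2 = 0 := le_antisymm hle hcd0
    rw [hz0] at him
    rw [div_zero] at him
    exact absurd him (not_le.mpr hm)
  have h1 : m * (c ^ 2 + d ^ 2) ≤ 1 := (le_div_iff₀ hcdpos).mp him
  have hcd : c ^ 2 + d ^ 2 ≤ 1 / m := by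
    rw [le_div_iff₀ hm]
    linarith
  refine ⟨?_, hcd⟩
  have hns2 : Complex.normSq (z / δ) ≤ R ^ 2 := by
    have h0 : (0 : ℝ) ≤ ‖z / δ‖ := norm_nonneg _
    have := Complex.sq_norm (z / δ)
    nlinarith
  rw [map_div₀, hnsz, hnsδ] at hns2
  rw [div_le_iff₀ hcdpos] at hns2
  have hR0 : (0 : ℝ) ≤ R ^ 2 := by positivity
  rw [le_div_iff₀ hm]
  nlinarith [mul_le_mul_of_nonneg_right hns2 hm.le, mul_le_mul_of_nonneg_left h1 hR0]

lemma isCompact_T {K : Set ℍ} (hK : IsCompact K) (hne : K.Nonempty) :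
    IsCompact {g : SL2R | g • o ∈ K} := by
  set K' : Set ℂ := (fun z : ℍ => (z : ℂ)) '' K with hK'def
  have hK' : IsCompact K' := hK.image UpperHalfPlane.continuous_coe
  have hK'ne : K'.Nonempty := hne.image _
  obtain ⟨w₀, hw₀K, hw₀min⟩ := hK'.exists_isMinOn hK'ne Complex.continuous_im.continuousOn
  set m : ℝ := w₀.im with hmdef
  have hm : 0 < m := by
    obtain ⟨z, _, rfl⟩ := hw₀K
    exact z.2
  obtain ⟨R, hR⟩ := hK'.isBounded.subset_closedBall 0
  set B : ℝ := Real.sqrt (max (R ^ 2 / m) (1 / m)) with hBdef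
  have hTset : {g : SL2R | g • o ∈ K} = (fun g : SL2R => ((g • o : ℍ) : ℂ)) ⁻¹' K' := by
    ext g
    simp only [Set.mem_setOf_eq, Set.mem_preimage]
    constructor
    · intro h; exact ⟨g • o, h, rfl⟩
    · rintro ⟨z, hz, hzeq⟩
      have hze : z = g • o := UpperHalfPlane.ext hzeq
      rw [← hze]
      exact hz
  have hTclosed : IsClosed {g : SL2R | g • o ∈ K} := by
    rw [hTset]
    exact hK'.isClosed.preimage continuous_psi
  have hbox : IsCompact (Set.pi (Set.univ : Set (Fin 2))
      (fun _ => Set.pi Set.univ fun _ => Icc (-B) B) : Set (Matrix (Fin 2) (Fin 2) ℝ)) :=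
    isCompact_univ_pi fun _ => isCompact_univ_pi fun _ => isCompact_Icc
  have hB : ∀ e : ℝ, e ^ 2 ≤ max (R ^ 2 / m) (1 / m) → e ∈ Icc (-B) B := by
    intro e he
    have h1 : Real.sqrt (e ^ 2) ≤ B := Real.sqrt_le_sqrt he
    rw [Real.sqrt_sq_eq_abs] at h1
    have h2 := abs_le.mp h1
    exact ⟨h2.1, h2.2⟩
  have hsub : (fun g : SL2R => (g : Matrix (Fin 2) (Fin 2) ℝ)) '' {g : SL2R | g • o ∈ K} ⊆
      Set.pi Set.univ (fun _ => Set.pi Set.univ fun _ => Icc (-B) B) := by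
    rintro M ⟨g, hg, rfl⟩
    have hw : ((g • o : ℍ) : ℂ) ∈ K' := ⟨g • o, hg, rfl⟩
    have hdet : g 0 0 * g 1 1 - g 0 1 * g 1 0 = 1 := by
      have h := g.2
      rw [Matrix.det_fin_two] at h
      exact h
    have hw2 := coe_smul_o g
    have him : m ≤ ((((g 0 0 : ℝ) : ℂ) * Complex.I + ((g 0 1 : ℝ) : ℂ)) /
        (((g 1 0 : ℝ) : ℂ) * Complex.I + ((g 1 1 : ℝ) : ℂ))).im := by
      rw [← hw2]
      exact hw₀min hw
    have habs : ‖(((g 0 0 : ℝ) : ℂ) * Complex.I + ((g 0 1 : ℝ) : ℂ)) /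
        (((g 1 0 : ℝ) : ℂ) * Complex.I + ((g 1 1 : ℝ) : ℂ))‖ ≤ R := by
      rw [← hw2]
      have := hR hw
      rw [mem_closedBall, dist_zero_right] at this
      exact this
    obtain ⟨hab, hcd⟩ := entries_bound hdet hm him habs
    intro i _
    intro j _
    fin_cases i <;> fin_cases j
    · show (g 0 0 : ℝ) ∈ Icc (-B) B
      exact hB _ (le_trans (by nlinarith [sq_nonneg (g 0 1)]) (le_max_left _ _))
    · show (g 0 1 : ℝ) ∈ Icc (-B) B
      exact hB _ (le_trans (by nlinarith [sq_nonneg (g 0 0)]) (le_max_left _ _))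
    · show (g 1 0 : ℝ) ∈ Icc (-B) B
      exact hB _ (le_trans (by nlinarith [sq_nonneg (g 1 1)]) (le_max_right _ _))
    · show (g 1 1 : ℝ) ∈ Icc (-B) B
      exact hB _ (le_trans (by nlinarith [sq_nonneg (g 1 0)]) (le_max_right _ _))
  have himg : IsCompact ((fun g : SL2R => (g : Matrix (Fin 2) (Fin 2) ℝ)) ''
      {g : SL2R | g • o ∈ K}) :=
    hbox.of_isClosed_subset (closedEmbedding_coeMatrix.isClosedMap _ hTclosed) hsub
  exact embedding_coeMatrix.isCompact_iff.mpr himg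

lemma isCompact_S {K : Set ℍ} (hK : IsCompact K) (hne : K.Nonempty) :
    IsCompact {g : SL2R | g⁻¹ • o ∈ K} := by
  have h1 : {g : SL2R | g⁻¹ • o ∈ K} = (fun g : SL2R => g⁻¹) '' {g : SL2R | g • o ∈ K} := by
    ext g
    constructor
    · intro h; exact ⟨g⁻¹, h, inv_inv g⟩
    · rintro ⟨t, ht, rfl⟩; simpa using ht
  rw [h1]
  exact (isCompact_T hK hne).image continuous_inv

end SLAux

/-- A discrete cocompact subgroup of a discrete subgroup of `SL(2,ℝ)` has finite index. -/
theorem finite_index_of_cocompact_le_discrete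
    (H Γ : Subgroup SL2R) (hle : Γ ≤ H)
    (hHdisc : DiscreteTopology H)
    (hΓdisc : DiscreteTopology Γ) (hΓcc : IsCocompact Γ) :
    (Γ.subgroupOf H).index ≠ 0 := by
  classical
  obtain ⟨K, hK, hcov⟩ := hΓcc
  have hKne : K.Nonempty := by
    have h1 : (o : ℍ) ∈ ⋃ γ : Γ, (γ : SL2R) • K := by rw [hcov]; trivial
    obtain ⟨_, ⟨γ, rfl⟩, hz⟩ := h1
    obtain ⟨k, hk, -⟩ := hz
    exact ⟨k, hk⟩
  set S : Set SL2R := {g : SL2R | g⁻¹ • o ∈ K} with hSdef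
  have hS : IsCompact S := SLAux.isCompact_S hK hKne
  have hHclosed : IsClosed (H : Set SL2R) := Subgroup.isClosed_of_discrete
  set F : Set SL2R := (H : Set SL2R) ∩ S with hFdef
  have hFcompact : IsCompact F := hS.inter_left hHclosed
  have hFdisc : DiscreteTopology F := by
    have : DiscreteTopology ((H : Set SL2R) : Type) := hHdisc
    exact DiscreteTopology.of_subset this Set.inter_subset_left
  have hFfin : F.Finite := hFcompact.finite (isDiscrete_iff_discreteTopology.mpr hFdisc)
  set N := Γ.subgroupOf H with hNdef
  have key : ∀ q : H ⧸ N, ∃ g : H, (g : SL2R) ∈ F ∧ QuotientGroup.mk g = q := by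
    intro q
    set h : H := Quotient.out q with hh
    have h1 : ((h : SL2R)⁻¹ • o) ∈ ⋃ γ : Γ, (γ : SL2R) • K := by rw [hcov]; trivial
    obtain ⟨_, ⟨γ, rfl⟩, hz⟩ := h1
    obtain ⟨k, hk, hγk⟩ := hz
    set γ' : H := ⟨(γ : SL2R), hle γ.2⟩ with hγ'
    refine ⟨h * γ', ⟨(h * γ').2, ?_⟩, ?_⟩
    · show ((h * γ' : H) : SL2R)⁻¹ • o ∈ K
      have : ((h * γ' : H) : SL2R)⁻¹ • o = (γ : SL2R)⁻¹ • ((h : SL2R)⁻¹ • o) := by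
        push_cast
        rw [mul_inv_rev, mul_smul]
      rw [this, ← hγk, ← mul_smul, inv_mul_cancel, one_smul]
      exact hk
    · have h2 : QuotientGroup.mk (s := N) h = QuotientGroup.mk (h * γ') := by
        rw [QuotientGroup.eq]
        have : h⁻¹ * (h * γ') = γ' := by group
        rw [this]
        rw [hNdef, Subgroup.mem_subgroupOf]
        exact γ.2
      rw [← h2, hh]
      exact Quotient.out_eq' q
  have hfin : Finite (H ⧸ N) := by
    have : Finite F := hFfin.to_subtype
    apply Finite.of_injective (fun q : H ⧸ N => (⟨((key q).choose : SL2R), (key q).choose_spec.1⟩ : F))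
    intro q1 q2 hq
    have h1 := (key q1).choose_spec.2
    have h2 := (key q2).choose_spec.2
    rw [← h1, ← h2]
    congr 1
    simp only [Subtype.mk.injEq] at hq
    exact Subtype.ext hq
  exact Subgroup.index_ne_zero_of_finite
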